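/- For α ∈ [0, π) and t ∈ [-cos(α/2), cos(α/2)], γ ∈ ℝ, the matrix U = i e^{iα/2} · [[sin(α/2) + it, √(cos²(α/2) - t²) e^{iγ}], [-√(cos²(α/2) - t²) e^{-iγ}, sin(α/2) - it]] is unitary with eigenvalues -1 and e^{iα}. -/

import Mathlib

/-- For `α ∈ [0, π)`, `t ∈ [-cos(α/2), cos(α/2)]`, `γ ∈ ℝ`, the matrix
`U = i e^{iα/2} [[sin(α/2) + it, √(cos²(α/2) - t²) e^{iγ}],
[-√(cos²(α/2) - t²) e^{-iγ}, sin(α/2) - it]]` is unitary with eigenvalues `-1` and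
`e^{iα}` (equivalently, trace `-1 + e^{iα}` and determinant `-e^{iα}`). -/
theorem stmt13 (α t γ : ℝ) (hα : α ∈ Set.Ico 0 Real.pi)
    (ht : t ∈ Set.Icc (-(Real.cos (α / 2))) (Real.cos (α / 2))) :
    ((Complex.I * Complex.exp ((α / 2 : ℝ) * Complex.I)) •
        !![(Real.sin (α / 2) : ℂ) + t * Complex.I,
             (Real.sqrt (Real.cos (α / 2) ^ 2 - t ^ 2) : ℂ) * Complex.exp (γ * Complex.I);
           -((Real.sqrt (Real.cos (α / 2) ^ 2 - t ^ 2) : ℂ)) * Complex.exp (-(γ * Complex.I)),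
             (Real.sin (α / 2) : ℂ) - t * Complex.I] : Matrix (Fin 2) (Fin 2) ℂ)
      ∈ Matrix.unitaryGroup (Fin 2) ℂ ∧
    ((Complex.I * Complex.exp ((α / 2 : ℝ) * Complex.I)) •
        !![(Real.sin (α / 2) : ℂ) + t * Complex.I,
             (Real.sqrt (Real.cos (α / 2) ^ 2 - t ^ 2) : ℂ) * Complex.exp (γ * Complex.I);
           -((Real.sqrt (Real.cos (α / 2) ^ 2 - t ^ 2) : ℂ)) * Complex.exp (-(γ * Complex.I)),
             (Real.sin (α / 2) : ℂ) - t * Complex.I] : Matrix (Fin 2) (Fin 2) ℂ).trace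
      = -1 + Complex.exp (α * Complex.I) ∧
    ((Complex.I * Complex.exp ((α / 2 : ℝ) * Complex.I)) •
        !![(Real.sin (α / 2) : ℂ) + t * Complex.I,
             (Real.sqrt (Real.cos (α / 2) ^ 2 - t ^ 2) : ℂ) * Complex.exp (γ * Complex.I);
           -((Real.sqrt (Real.cos (α / 2) ^ 2 - t ^ 2) : ℂ)) * Complex.exp (-(γ * Complex.I)),
             (Real.sin (α / 2) : ℂ) - t * Complex.I] : Matrix (Fin 2) (Fin 2) ℂ).det
      = -Complex.exp (α * Complex.I) := by
  obtain ⟨ht1, ht2⟩ := ht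
  have ht2' : t ^ 2 ≤ Real.cos (α / 2) ^ 2 := sq_le_sq' ht1 ht2
  have hr2 : (Real.sqrt (Real.cos (α / 2) ^ 2 - t ^ 2) : ℂ) ^ 2
      = (Real.cos (α / 2) : ℂ) ^ 2 - (t : ℂ) ^ 2 := by
    have h := Real.sq_sqrt (by linarith : (0:ℝ) ≤ Real.cos (α / 2) ^ 2 - t ^ 2)
    exact_mod_cast congrArg (Complex.ofReal ·) h
  have hsc : (Real.sin (α / 2) : ℂ) ^ 2 + (Real.cos (α / 2) : ℂ) ^ 2 = 1 := by
    exact_mod_cast congrArg (Complex.ofReal ·) (Real.sin_sq_add_cos_sq (α / 2))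
  have hee : Complex.exp (γ * Complex.I) * Complex.exp (-(γ * Complex.I)) = 1 := by
    rw [← Complex.exp_add]; simp
  set s : ℂ := (Real.sin (α / 2) : ℂ)
  set c : ℂ := (Real.cos (α / 2) : ℂ)
  set r : ℂ := (Real.sqrt (Real.cos (α / 2) ^ 2 - t ^ 2) : ℂ)
  set E : ℂ := Complex.exp ((α / 2 : ℝ) * Complex.I) with hE
  set E' : ℂ := Complex.exp (-((α / 2 : ℝ) * Complex.I)) with hE'
  set z : ℂ := Complex.I * E with hz
  have hEE : E * E = Complex.exp (α * Complex.I) := by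
    rw [hE, ← Complex.exp_add]; push_cast; ring_nf
  have hEE' : E * E' = 1 := by rw [hE, hE', ← Complex.exp_add]; simp
  have habs : ‖z‖ = 1 := by
    simp [hz, hE, norm_mul, Complex.norm_exp]
  have hzz : z * (starRingEnd ℂ) z = 1 := by
    rw [Complex.mul_conj, ← Complex.sq_norm, habs]; norm_num
  have hsum : s ^ 2 + (t : ℂ) ^ 2 + r ^ 2 = 1 := by
    rw [hr2]; linear_combination hsc
  have hs : s = (E' - E) * Complex.I / 2 := by
    rw [show s = Complex.sin ((α/2 : ℝ) : ℂ) from by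
      rw [← Complex.ofReal_sin], Complex.sin, hE, hE']
    ring_nf
  have hsin : 2 * Complex.I * s * E = Complex.exp (α * Complex.I) - 1 := by
    rw [hs]
    linear_combination hEE - hEE' + (E' * E - E * E) * Complex.I_sq
  have hconjz : (starRingEnd ℂ) z = -Complex.I * E' := by
    rw [hz, map_mul, Complex.conj_I, hE, ← Complex.exp_conj,
      show (starRingEnd ℂ) (((α/2 : ℝ) : ℂ) * Complex.I) = -(((α/2 : ℝ) : ℂ) * Complex.I) by
        rw [map_mul, Complex.conj_ofReal, Complex.conj_I]; ring, ← hE']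
  have hconjE : (starRingEnd ℂ) (Complex.exp (γ * Complex.I)) = Complex.exp (-(γ * Complex.I)) := by
    rw [← Complex.exp_conj]; simp [Complex.conj_ofReal]
  have hconjE2 : (starRingEnd ℂ) (Complex.exp (-(γ * Complex.I))) = Complex.exp (γ * Complex.I) := by
    rw [← Complex.exp_conj]; simp [Complex.conj_ofReal]
  have hK : z * (Complex.I * E') = -1 := by
    rw [hz]; linear_combination (E * E') * Complex.I_sq - hEE'
  have hconjs : (starRingEnd ℂ) s = s := Complex.conj_ofReal _
  have hconjr : (starRingEnd ℂ) r = r := Complex.conj_ofReal _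
  have hz2 : z * z = -(Complex.exp (α * Complex.I)) := by
    rw [hz, show Complex.I * E * (Complex.I * E) = Complex.I ^ 2 * (E * E) from by ring,
      Complex.I_sq, hEE]; ring
  have hee2 : Complex.exp (Complex.I * γ) * Complex.exp (-(Complex.I * γ)) = 1 := by
    rw [← Complex.exp_add]; simp
  refine ⟨?_, ?_, ?_⟩
  · rw [Matrix.mem_unitaryGroup_iff]
    ext i j
    fin_cases i <;> fin_cases j <;>
      simp [Matrix.mul_apply, Fin.sum_univ_two, Matrix.star_apply, Matrix.conjTranspose_apply,
        Matrix.smul_apply, map_mul, map_add, map_sub, Complex.conj_ofReal, Complex.conj_I,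
        hconjE, hconjE2, hconjz, hconjs, hconjr, Matrix.one_apply] <;>
      try ring
    all_goals
      simp only [mul_comm (γ : ℂ) Complex.I] at hee ⊢
      linear_combination
          (-(E * E' * s ^ 2) -
              E * E' * r ^ 2 * (Complex.exp (Complex.I * γ) * Complex.exp (-(Complex.I * γ))) +
              (Complex.I ^ 2 - 1) * E * E' * (t : ℂ) ^ 2) * Complex.I_sq +
            E * E' * r ^ 2 * hee2 + E * E' * hsum + hEE'
  · simp [Matrix.trace_fin_two, Matrix.smul_apply]
    try linear_combination hsin + 2 * s * hz
  · simp [Matrix.det_fin_two, Matrix.smul_apply]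
    linear_combination (z * z) * hsum + (z * z * r ^ 2) * hee + hz2 -
      (E ^ 2 * (t : ℂ) ^ 2 * Complex.I ^ 2) * Complex.I_sq
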